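/- arXiv:1709.07847 — 3 statements merged into one kernel-verified Lean document; each statement's English description precedes it below -/
import Mathlib

section
/- Let α, β ≥ 0 with α + β < 1, where p_n denotes the n-th prime number. Then liminf_{n → ∞} p_n^β · (p_{n+1}^α − p_n^α) = 0. -/
open Filter Real

/-- Chebyshev-type bound: `4^m ≤ (2m)^(π(2m)+1)`. -/
lemma chebA (m : ℕ) (hm : 0 < m) : 4 ^ m ≤ (2 * m) ^ ((2 * m).primeCounting + 1) := by
  have h1 := Nat.four_pow_le_two_mul_self_mul_centralBinom m hm
  have hcb : m.centralBinom ≠ 0 := m.centralBinom_pos.ne'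
  have h2 : m.centralBinom ≤ (2 * m) ^ ((2 * m).primeCounting) := by
    calc m.centralBinom = m.centralBinom.factorization.prod (· ^ ·) :=
        (Nat.factorization_prod_pow_eq_self hcb).symm
      _ ≤ (2 * m) ^ (m.centralBinom.factorization.support.card) := by
          rw [Finsupp.prod]
          apply Finset.prod_le_pow_card
          intro p _
          unfold Nat.centralBinom
          exact Nat.pow_factorization_choose_le (by omega)
      _ ≤ (2 * m) ^ ((2 * m).primeCounting) := by
          apply Nat.pow_le_pow_right (by omega)
          rw [Nat.primeCounting, ← Nat.primesBelow_card_eq_primeCounting']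
          apply Finset.card_le_card
          intro p hp
          have hp' := hp
          rw [Nat.support_factorization] at hp'
          have hpp : p.Prime := Nat.prime_of_mem_primeFactors hp'
          have hple : p ≤ 2 * m := by
            have h := Nat.pow_factorization_choose_le (p := p) (n := 2 * m) (k := m)
              (by omega)
            have hν : 0 < m.centralBinom.factorization p := by
              have := Finsupp.mem_support_iff.mp hp
              omega
            calc p = p ^ 1 := (pow_one p).symm
              _ ≤ p ^ (m.centralBinom.factorization p) :=
                  Nat.pow_le_pow_right hpp.one_le hν
              _ ≤ 2 * m := by unfold Nat.centralBinom; exact h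
          exact Nat.mem_primesBelow.mpr ⟨by omega, hpp⟩
  calc 4 ^ m ≤ 2 * m * m.centralBinom := h1
    _ ≤ 2 * m * (2 * m) ^ ((2 * m).primeCounting) := Nat.mul_le_mul_left _ h2
    _ = (2 * m) ^ ((2 * m).primeCounting + 1) := by rw [pow_succ]; ring

/-- Bound on the `M`-th prime: `2^(p_M - 1) ≤ p_M^(M+2)`. -/
lemma chebB (M : ℕ) :
    2 ^ (Nat.nth Nat.Prime M - 1) ≤ (Nat.nth Nat.Prime M) ^ (M + 2) := by
  set p := Nat.nth Nat.Prime M with hp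
  have hp2 : 2 ≤ p := (Nat.prime_nth_prime M).two_le
  set m := p / 2 with hm
  have hdm := Nat.div_add_mod p 2
  have hmod : p % 2 < 2 := Nat.mod_lt p (by norm_num)
  have hm1 : 1 ≤ m := by omega
  have h2m : 2 * m ≤ p := by omega
  have hπ : (2 * m).primeCounting + 1 ≤ M + 2 := by
    have h1 : (2 * m).primeCounting ≤ p.primeCounting := Nat.monotone_primeCounting h2m
    have h2 : p.primeCounting = M + 1 := by
      have hc : Nat.count Nat.Prime p = M := Nat.primeCounting'_nth_eq M
      show Nat.count Nat.Prime (p + 1) = M + 1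
      rw [Nat.count_succ, hc, if_pos (Nat.prime_nth_prime M)]
    omega
  calc 2 ^ (p - 1) ≤ 2 ^ (2 * m) := Nat.pow_le_pow_right (by norm_num) (by omega)
    _ = 4 ^ m := by rw [pow_mul]; norm_num
    _ ≤ (2 * m) ^ ((2 * m).primeCounting + 1) := chebA m hm1
    _ ≤ p ^ ((2 * m).primeCounting + 1) := Nat.pow_le_pow_left h2m _
    _ ≤ p ^ (M + 2) := Nat.pow_le_pow_right (by omega) hπ

/-- Polynomial upper bound on primes: for any `δ > 0`, eventually `p_M ≤ M^(1+δ)`. -/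
lemma nth_prime_le_rpow {δ : ℝ} (hδ : 0 < δ) :
    ∀ᶠ M : ℕ in atTop, (Nat.nth Nat.Prime M : ℝ) ≤ (M : ℝ) ^ (1 + δ) := by
  have h1δ : (0 : ℝ) < 1 + δ := by linarith
  set c : ℝ := 1 / (1 + δ) with hc
  have hc0 : 0 < c := by positivity
  have hc1 : c < 1 := by rw [hc, div_lt_one h1δ]; linarith
  set c' : ℝ := (1 - c) / 2 with hc'
  have hc'0 : 0 < c' := by rw [hc']; linarith
  have E1 : ∀ᶠ x : ℝ in atTop, Real.log x ≤ x ^ c' := by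
    have h := (isLittleO_log_rpow_atTop hc'0).bound one_pos
    filter_upwards [h, eventually_ge_atTop (1 : ℝ)] with x hx hx1
    have hx' : |Real.log x| ≤ 1 * |x ^ c'| := by simpa [Real.norm_eq_abs] using hx
    calc Real.log x ≤ |Real.log x| := le_abs_self _
      _ ≤ 1 * |x ^ c'| := hx'
      _ = x ^ c' := by rw [one_mul, abs_of_nonneg (Real.rpow_nonneg (by linarith) _)]
  have E3 : ∀ᶠ x : ℝ in atTop, 6 / Real.log 2 ≤ x ^ c' :=
    (tendsto_rpow_atTop hc'0).eventually_ge_atTop _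
  have hx_tend : Tendsto (fun M : ℕ => (Nat.nth Nat.Prime M : ℝ)) atTop atTop :=
    tendsto_natCast_atTop_atTop.comp
      ((Nat.nth_strictMono Nat.infinite_setOf_prime).tendsto_atTop)
  filter_upwards [hx_tend.eventually E1, hx_tend.eventually E3,
    hx_tend.eventually (eventually_ge_atTop (2 : ℝ))] with M h1 h3 h2
  set p := Nat.nth Nat.Prime M with hpdef
  set x : ℝ := (p : ℝ) with hxdef
  have hp2 : 2 ≤ p := (Nat.prime_nth_prime M).two_le
  have hx2 : (2 : ℝ) ≤ x := by rw [hxdef]; exact_mod_cast hp2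
  have hx0 : (0 : ℝ) < x := by linarith
  have hx1 : (1 : ℝ) < x := by linarith
  have hlogx : 0 < Real.log x := Real.log_pos hx1
  have hlog2 : 0 < Real.log 2 := Real.log_pos one_lt_two
  -- cast the key natural-number inequality
  have hkey := chebB M
  have hcast : (x - 1) * Real.log 2 ≤ ((M : ℝ) + 2) * Real.log x := by
    have hcastle : (2 : ℝ) ^ (p - 1) ≤ (p : ℝ) ^ (M + 2) := by
      exact_mod_cast hkey
    have hlog := Real.log_le_log (by positivity) hcastle
    rw [Real.log_pow, Real.log_pow] at hlog
    have hsub : ((p - 1 : ℕ) : ℝ) = x - 1 := by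
      rw [hxdef, Nat.cast_sub (by omega)]
      norm_num
    rw [hsub] at hlog
    rw [hxdef]
    push_cast at hlog ⊢
    linarith
  -- the analytic inequality (x^c + 2) * log x ≤ (x - 1) * log 2
  have hA : (x ^ c + 2) * Real.log x ≤ (x - 1) * Real.log 2 := by
    have l1 : (x ^ c + 2) * Real.log x ≤ (x ^ c + 2) * x ^ c' := by
      apply mul_le_mul_of_nonneg_left h1
      positivity
    have e : x ^ (c + c') = x ^ c * x ^ c' := Real.rpow_add hx0 c c'
    have hxc'le : x ^ c' ≤ x ^ (c + c') :=
      Real.rpow_le_rpow_of_exponent_le hx1.le (by linarith)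
    have l2 : (x ^ c + 2) * x ^ c' ≤ 3 * x ^ (c + c') := by nlinarith
    have hsum : c + c' + c' = 1 := by rw [hc']; ring
    have ex : x = x ^ (c + c') * x ^ c' := by
      have h := Real.rpow_add hx0 (c + c') c'
      rw [hsum, Real.rpow_one] at h
      exact h
    have h6 : 6 ≤ x ^ c' * Real.log 2 := by
      rw [div_le_iff₀ hlog2] at h3; linarith
    have hA1 : 1 ≤ x ^ (c + c') := Real.one_le_rpow hx1.le (by linarith)
    have hL1 : Real.log 2 ≤ 1 := by
      have := Real.log_le_sub_one_of_pos (x := 2) (by norm_num)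
      linarith
    have l3 : 3 * x ^ (c + c') ≤ (x - 1) * Real.log 2 := by
      have h6A : 6 * x ^ (c + c') ≤ x ^ c' * Real.log 2 * x ^ (c + c') :=
        mul_le_mul_of_nonneg_right h6 (by positivity)
      nlinarith
    linarith
  have hstep : x ^ c + 2 ≤ (M : ℝ) + 2 :=
    le_of_mul_le_mul_right (hA.trans hcast) hlogx
  have hxcM : x ^ c ≤ (M : ℝ) := by linarith
  have hid : x = (x ^ c) ^ (1 + δ) := by
    rw [← Real.rpow_mul hx0.le, hc, one_div_mul_cancel h1δ.ne', Real.rpow_one]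
  calc x = (x ^ c) ^ (1 + δ) := hid
    _ ≤ (M : ℝ) ^ (1 + δ) :=
        Real.rpow_le_rpow (Real.rpow_nonneg hx0.le _) hxcM h1δ.le

theorem stmt_0 (α β : ℝ) (hα : 0 ≤ α) (hβ : 0 ≤ β) (hab : α + β < 1) :
    Filter.atTop.liminf (fun n : ℕ =>
      (Nat.nth Nat.Prime n : ℝ) ^ β *
        ((Nat.nth Nat.Prime (n + 1) : ℝ) ^ α - (Nat.nth Nat.Prime n : ℝ) ^ α)) = 0 := by
  set q : ℕ → ℝ := fun n => (Nat.nth Nat.Prime n : ℝ) with hqdef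
  set u : ℕ → ℝ := fun n => q n ^ β * (q (n + 1) ^ α - q n ^ α) with hu
  show Filter.atTop.liminf u = 0
  have hq2 : ∀ n : ℕ, (2 : ℝ) ≤ q n := fun n => by
    simp only [hqdef]
    exact_mod_cast (Nat.prime_nth_prime n).two_le
  have hq0 : ∀ n : ℕ, (0 : ℝ) < q n := fun n => lt_of_lt_of_le two_pos (hq2 n)
  have hqmono : ∀ {a b : ℕ}, a ≤ b → q a ≤ q b := fun {a b} h => by
    simp only [hqdef]
    exact_mod_cast (Nat.nth_strictMono Nat.infinite_setOf_prime).monotone h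
  have hnonneg : ∀ n, 0 ≤ u n := by
    intro n
    apply mul_nonneg (Real.rpow_nonneg (hq0 n).le _)
    rw [sub_nonneg]
    exact Real.rpow_le_rpow (hq0 n).le (hqmono (Nat.le_succ n)) hα
  rcases hα.eq_or_lt with h0 | hαpos
  · have : u = fun _ => (0 : ℝ) := by
      funext n
      simp [hu, ← h0, Real.rpow_zero]
    rw [this, Filter.liminf_const]
  -- main case : α > 0
  set s : ℝ := α + β with hs
  have hs0 : 0 < s := by linarith
  have hs1 : s < 1 := hab
  set t : ℝ := (1 + s) / 2 with ht
  have ht0 : 0 < t := by rw [ht]; linarith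
  have ht1 : t < 1 := by rw [ht]; linarith
  set δ : ℝ := (1 - s) / (2 * s) with hδdef
  have hδ : 0 < δ := by rw [hδdef]; exact div_pos (by linarith) (by linarith)
  have hts : (1 + δ) * s = t := by
    rw [hδdef, ht]; field_simp; ring
  have key : ∀ ε : ℝ, 0 < ε → ∃ᶠ n in atTop, u n ≤ ε := by
    intro ε hε
    have hE : ∀ᶠ N : ℕ in atTop, (q (2 * N)) ^ s < ε * N := by
      have h2N : Tendsto (fun N : ℕ => 2 * N) atTop atTop :=
        StrictMono.tendsto_atTop (fun a b h => by omega)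
      have hC2 := h2N.eventually (nth_prime_le_rpow hδ)
      have hN : ∀ᶠ N : ℕ in atTop, (2 : ℝ) ^ t / ε < (N : ℝ) ^ (1 - t) :=
        ((tendsto_rpow_atTop (by linarith)).comp
          tendsto_natCast_atTop_atTop).eventually_gt_atTop _
      filter_upwards [hC2, hN, eventually_ge_atTop 1] with N h1 h2 h3
      have hN0 : (0 : ℝ) < N := by exact_mod_cast h3
      have hcast : ((2 * N : ℕ) : ℝ) = 2 * (N : ℝ) := by push_cast; ring
      have step1 : (q (2 * N)) ^ s ≤ (2 * (N : ℝ)) ^ t := by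
        rw [← hts, ← hcast, Real.rpow_mul (by positivity)]
        exact Real.rpow_le_rpow (hq0 _).le (by simpa using h1) hs0.le
      have step2 : (2 * (N : ℝ)) ^ t = 2 ^ t * (N : ℝ) ^ t :=
        Real.mul_rpow (by norm_num) hN0.le
      have hNt : (N : ℝ) ^ t * (N : ℝ) ^ (1 - t) = (N : ℝ) := by
        rw [← Real.rpow_add hN0]; norm_num
      have h2' : (2 : ℝ) ^ t < ε * (N : ℝ) ^ (1 - t) := by
        rw [div_lt_iff₀ hε] at h2; linarith
      have step3 : (2 : ℝ) ^ t * (N : ℝ) ^ t < ε * N := by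
        calc (2 : ℝ) ^ t * (N : ℝ) ^ t < (ε * (N : ℝ) ^ (1 - t)) * (N : ℝ) ^ t :=
            mul_lt_mul_of_pos_right h2' (Real.rpow_pos_of_pos hN0 t)
          _ = ε * ((N : ℝ) ^ t * (N : ℝ) ^ (1 - t)) := by ring
          _ = ε * N := by rw [hNt]
      calc (q (2 * N)) ^ s ≤ (2 * (N : ℝ)) ^ t := step1
        _ = 2 ^ t * (N : ℝ) ^ t := step2
        _ < ε * N := step3
    rw [Filter.frequently_atTop]
    intro N₀
    obtain ⟨N, hNE, hN1, hNN₀⟩ :=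
      (hE.and ((eventually_ge_atTop 1).and (eventually_ge_atTop N₀))).exists
    by_contra hcon
    push_neg at hcon
    have hall : ∀ n ∈ Finset.Ico N (2 * N), ε ≤ u n := by
      intro n hn
      exact (hcon n (le_trans hNN₀ (Finset.mem_Ico.mp hn).1)).le
    have hsum := Finset.card_nsmul_le_sum (Finset.Ico N (2 * N)) u ε hall
    have hcard : (Finset.Ico N (2 * N)).card = N := by
      rw [Nat.card_Ico]; omega
    rw [hcard, nsmul_eq_mul] at hsum
    -- upper bound on the sum
    have hub1 : ∀ n ∈ Finset.Ico N (2 * N),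
        u n ≤ q (2 * N) ^ β * (q (n + 1) ^ α - q n ^ α) := by
      intro n hn
      obtain ⟨hn1, hn2⟩ := Finset.mem_Ico.mp hn
      apply mul_le_mul_of_nonneg_right
      · exact Real.rpow_le_rpow (hq0 n).le (hqmono hn2.le) hβ
      · rw [sub_nonneg]
        exact Real.rpow_le_rpow (hq0 n).le (hqmono (Nat.le_succ n)) hα
    have tel : ∑ n ∈ Finset.Ico N (2 * N), (q (n + 1) ^ α - q n ^ α)
        = q (2 * N) ^ α - q N ^ α := by
      rw [Finset.sum_Ico_eq_sub _ (by omega : N ≤ 2 * N),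
        Finset.sum_range_sub (fun n => q n ^ α), Finset.sum_range_sub (fun n => q n ^ α)]
      ring
    have hub : ∑ n ∈ Finset.Ico N (2 * N), u n ≤ q (2 * N) ^ s := by
      calc ∑ n ∈ Finset.Ico N (2 * N), u n
          ≤ ∑ n ∈ Finset.Ico N (2 * N), q (2 * N) ^ β * (q (n + 1) ^ α - q n ^ α) :=
            Finset.sum_le_sum hub1
        _ = q (2 * N) ^ β * (q (2 * N) ^ α - q N ^ α) := by
            rw [← Finset.mul_sum, tel]
        _ ≤ q (2 * N) ^ β * q (2 * N) ^ α := by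
            apply mul_le_mul_of_nonneg_left _ (Real.rpow_nonneg (hq0 _).le _)
            have := Real.rpow_nonneg (hq0 N).le α
            linarith
        _ = q (2 * N) ^ s := by
            rw [← Real.rpow_add (hq0 _), hs, add_comm]
    have hNε : (N : ℝ) * ε ≤ q (2 * N) ^ s := le_trans hsum hub
    have : (1 : ℝ) ≤ (N : ℝ) := by exact_mod_cast hN1
    nlinarith
  -- finish via liminf
  have hb : Filter.IsBoundedUnder (· ≥ ·) atTop u :=
    Filter.isBoundedUnder_of ⟨0, fun n => hnonneg n⟩
  have hcob : Filter.IsCoboundedUnder (· ≥ ·) atTop u :=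
    Filter.IsCoboundedUnder.of_frequently_le (key 1 one_pos)
  have hge : 0 ≤ Filter.atTop.liminf u :=
    Filter.le_liminf_of_le hcob (Filter.Eventually.of_forall hnonneg)
  have hle : Filter.atTop.liminf u ≤ 0 := by
    apply le_of_forall_pos_le_add
    intro ε hε
    have := Filter.liminf_le_of_frequently_le (key ε hε) hb
    linarith
  linarith
end

section
/- For every ε with 0 < ε ≤ 1/2, liminf_{n → ∞} p_n^{1/2 − ε} · (√p_{n+1} − √p_n) = 0, assuming there are infinitely many indices n such that p_{n+1} − p_n ≤ 246. -/
open Filter Real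

theorem stmt_5
    (hgap : {n : ℕ | Nat.nth Nat.Prime (n + 1) - Nat.nth Nat.Prime n ≤ 246}.Infinite)
    (ε : ℝ) (hε0 : 0 < ε) (hε1 : ε ≤ 1 / 2) :
    Filter.atTop.liminf (fun n : ℕ =>
      (Nat.nth Nat.Prime n : ℝ) ^ ((1 : ℝ) / 2 - ε) *
        (Real.sqrt (Nat.nth Nat.Prime (n + 1)) - Real.sqrt (Nat.nth Nat.Prime n))) = 0 := by
  set u : ℕ → ℝ := fun n : ℕ =>
      (Nat.nth Nat.Prime n : ℝ) ^ ((1 : ℝ) / 2 - ε) *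
        (Real.sqrt (Nat.nth Nat.Prime (n + 1)) - Real.sqrt (Nat.nth Nat.Prime n)) with hu
  have hinf : {p | Nat.Prime p}.Infinite := Nat.infinite_setOf_prime
  have hppos : ∀ n : ℕ, 0 < (Nat.nth Nat.Prime n : ℝ) := by
    intro n
    exact_mod_cast (Nat.nth_mem_of_infinite hinf n).pos
  have hmono : ∀ n : ℕ, Nat.nth Nat.Prime n ≤ Nat.nth Nat.Prime (n + 1) := fun n =>
    ((Nat.nth_lt_nth hinf).mpr (Nat.lt_succ_self n)).le
  have hnonneg : ∀ n : ℕ, 0 ≤ u n := by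
    intro n
    apply mul_nonneg (Real.rpow_nonneg (hppos n).le _)
    have := Real.sqrt_le_sqrt (by exact_mod_cast hmono n :
      ((Nat.nth Nat.Prime n : ℝ)) ≤ (Nat.nth Nat.Prime (n + 1) : ℝ))
    linarith
  -- key bound on the gap set
  have hbound : ∀ n ∈ {n : ℕ | Nat.nth Nat.Prime (n + 1) - Nat.nth Nat.Prime n ≤ 246},
      u n ≤ 246 * (Nat.nth Nat.Prime n : ℝ) ^ (-ε) := by
    intro n hn
    set p : ℝ := (Nat.nth Nat.Prime n : ℝ) with hp
    set q : ℝ := (Nat.nth Nat.Prime (n + 1) : ℝ) with hq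
    have hp0 : 0 < p := hppos n
    have hq0 : 0 < q := hppos (n + 1)
    have hpq : p ≤ q := by rw [hp, hq]; exact_mod_cast hmono n
    have hgap' : q - p ≤ 246 := by
      have : (Nat.nth Nat.Prime (n + 1) : ℝ) - (Nat.nth Nat.Prime n : ℝ) ≤ 246 := by
        rw [← Nat.cast_sub (hmono n)]
        exact_mod_cast hn
      simpa [hp, hq] using this
    have hsp : Real.sqrt p * Real.sqrt p = p := Real.mul_self_sqrt hp0.le
    have hsq : Real.sqrt q * Real.sqrt q = q := Real.mul_self_sqrt hq0.le
    have hsp0 : 0 < Real.sqrt p := Real.sqrt_pos.mpr hp0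
    have hsple : Real.sqrt p ≤ Real.sqrt q := Real.sqrt_le_sqrt hpq
    -- sqrt q - sqrt p ≤ 246 / sqrt p
    have hdiff : Real.sqrt q - Real.sqrt p ≤ 246 / Real.sqrt p := by
      rw [le_div_iff₀ hsp0]
      nlinarith [mul_le_mul_of_nonneg_right hsple hsp0.le]
    have hfact : p ^ ((1 : ℝ) / 2 - ε) = Real.sqrt p * p ^ (-ε) := by
      rw [Real.sqrt_eq_rpow, ← Real.rpow_add hp0]
      ring_nf
    have hrpos : (0 : ℝ) < p ^ (-ε) := Real.rpow_pos_of_pos hp0 _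
    calc u n = p ^ ((1 : ℝ) / 2 - ε) * (Real.sqrt q - Real.sqrt p) := rfl
      _ ≤ p ^ ((1 : ℝ) / 2 - ε) * (246 / Real.sqrt p) := by
          apply mul_le_mul_of_nonneg_left hdiff (Real.rpow_nonneg hp0.le _)
      _ = 246 * p ^ (-ε) := by
          rw [hfact]; field_simp
  -- frequently u n ≤ c for every c > 0
  have hfreq : ∀ c : ℝ, 0 < c → ∃ᶠ n in atTop, u n ≤ c := by
    intro c hc
    have hmem : ∃ᶠ n in atTop,
        n ∈ {n : ℕ | Nat.nth Nat.Prime (n + 1) - Nat.nth Nat.Prime n ≤ 246} :=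
      Nat.frequently_atTop_iff_infinite.mpr hgap
    have htend : Tendsto (fun n : ℕ => (n : ℝ) ^ ε) atTop atTop :=
      (tendsto_rpow_atTop hε0).comp tendsto_natCast_atTop_atTop
    have hev : ∀ᶠ n : ℕ in atTop, 246 / c ≤ (n : ℝ) ^ ε :=
      htend.eventually_ge_atTop (246 / c)
    refine (hmem.and_eventually hev).mono ?_
    rintro n ⟨hn, hn2⟩
    have hle : (n : ℝ) ≤ (Nat.nth Nat.Prime n : ℝ) := by
      exact_mod_cast (Nat.nth_strictMono hinf).le_apply
    have hpe : (n : ℝ) ^ ε ≤ (Nat.nth Nat.Prime n : ℝ) ^ ε :=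
      Real.rpow_le_rpow (Nat.cast_nonneg n) hle hε0.le
    have hpe' : 246 / c ≤ (Nat.nth Nat.Prime n : ℝ) ^ ε := hn2.trans hpe
    have hppos' : (0 : ℝ) < (Nat.nth Nat.Prime n : ℝ) ^ ε :=
      Real.rpow_pos_of_pos (hppos n) _
    have : 246 * (Nat.nth Nat.Prime n : ℝ) ^ (-ε) ≤ c := by
      rw [Real.rpow_neg (hppos n).le]
      rw [div_le_iff₀ hc] at hpe'
      rw [mul_inv_le_iff₀ hppos']
      linarith
    exact (hbound n hn).trans this
  -- conclude
  have hbdd : IsBoundedUnder (· ≥ ·) atTop u :=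
    ⟨0, Filter.eventually_map.mpr (Eventually.of_forall fun n => hnonneg n)⟩
  have hle0 : atTop.liminf u ≤ 0 := by
    by_contra h
    push_neg at h
    have := Filter.liminf_le_of_frequently_le (hfreq _ (half_pos h)) hbdd
    have h2 : atTop.liminf u / 2 < atTop.liminf u := by linarith
    linarith
  have hge0 : 0 ≤ atTop.liminf u := by
    refine Filter.le_liminf_of_le ?_ (Eventually.of_forall hnonneg)
    exact Filter.IsCoboundedUnder.of_frequently_le (hfreq 1 one_pos)
  linarith
end

section
/- Assume Cramér's Conjecture: there exists a constant C > 0 such that p_{n+1} − p_n < C·(log n)^2 for all sufficiently large n. Then for all α, β ≥ 0 with α + β < 1, there exists a constant C(α, β) such that p_n^β · (p_{n+1}^α − p_n^α) ≤ C(α, β) for all n. -/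
open Real Filter

private lemma key_bernoulli {x y a : ℝ} (hy : 0 < y) (hxy : y ≤ x) (ha : 0 ≤ a) (ha1 : a ≤ 1) :
    x ^ a - y ^ a ≤ a * (x - y) * y ^ (a - 1) := by
  have hs : (-1:ℝ) ≤ x / y - 1 := by
    have : 0 ≤ x / y := div_nonneg (hy.le.trans hxy) hy.le
    linarith
  have h := rpow_one_add_le_one_add_mul_self hs ha ha1
  rw [add_sub_cancel] at h
  have hx0 : 0 ≤ x := hy.le.trans hxy
  rw [Real.div_rpow hx0 hy.le] at h
  have hya : 0 < y ^ a := Real.rpow_pos_of_pos hy a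
  have h2 : x ^ a ≤ (1 + a * (x / y - 1)) * y ^ a := by
    rw [div_le_iff₀ hya] at h; linarith
  have h3 : y ^ (a - 1) = y ^ a / y := by
    rw [Real.rpow_sub hy, Real.rpow_one]
  rw [h3]
  have hexp : (1 + a * (x / y - 1)) * y ^ a = y ^ a + a * (x - y) * (y ^ a / y) := by
    field_simp
  rw [hexp] at h2
  linarith

theorem stmt_8
    (hCramer : ∃ C : ℝ, 0 < C ∧ ∀ᶠ n : ℕ in Filter.atTop,
      (Nat.nth Nat.Prime (n + 1) : ℝ) - (Nat.nth Nat.Prime n : ℝ) < C * (Real.log n) ^ 2)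
    (α β : ℝ) (hα : 0 ≤ α) (hβ : 0 ≤ β) (hab : α + β < 1) :
    ∃ Cαβ : ℝ, ∀ n : ℕ,
      (Nat.nth Nat.Prime n : ℝ) ^ β *
        ((Nat.nth Nat.Prime (n + 1) : ℝ) ^ α - (Nat.nth Nat.Prime n : ℝ) ^ α) ≤ Cαβ := by
  obtain ⟨C, hC, hev⟩ := hCramer
  set P : ℕ → ℝ := fun n => (Nat.nth Nat.Prime n : ℝ) with hP
  set a : ℕ → ℝ := fun n => P n ^ β * (P (n+1) ^ α - P n ^ α) with ha
  have hPpos : ∀ n, 0 < P n := fun n => by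
    have := (Nat.prime_nth_prime n).two_le
    simp only [hP]; exact_mod_cast lt_of_lt_of_le (by norm_num) (Nat.cast_le.mpr this)
  have hPmono : ∀ n, P n ≤ P (n+1) := fun n => by
    simp only [hP]
    exact_mod_cast (Nat.nth_le_nth Nat.infinite_setOf_prime).mpr (Nat.le_succ n)
  have hnP : ∀ n : ℕ, (n : ℝ) ≤ P n := fun n => by
    simp only [hP]
    exact_mod_cast Nat.le_nth (fun hf => absurd hf Nat.infinite_setOf_prime)
  -- tendsto of log^2 * x^(α+β-1)
  have htend : Tendsto (fun x : ℝ => Real.log x ^ (2:ℕ) * x ^ (α + β - 1)) atTop (nhds 0) := by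
    have hlo := isLittleO_log_rpow_rpow_atTop (2:ℝ) (s := 1 - (α + β)) (by linarith)
    have := hlo.tendsto_div_nhds_zero
    apply this.congr'
    filter_upwards [eventually_gt_atTop 0] with x hx
    rw [div_eq_mul_inv, ← Real.rpow_neg hx.le, show (2:ℝ) = ((2:ℕ):ℝ) by norm_num,
      Real.rpow_natCast]
    ring_nf
  have htendn : Tendsto (fun n : ℕ => Real.log n ^ (2:ℕ) * (n:ℝ) ^ (α + β - 1)) atTop (nhds 0) :=
    htend.comp tendsto_natCast_atTop_atTop
  set δ : ℝ := 1 / (α * C + 1) with hδ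
  have hδpos : 0 < δ := by positivity
  have hev2 : ∀ᶠ n : ℕ in atTop, a n ≤ 1 := by
    have hsmall : ∀ᶠ n : ℕ in atTop, Real.log n ^ (2:ℕ) * (n:ℝ) ^ (α + β - 1) < δ :=
      htendn.eventually (eventually_lt_nhds hδpos)
    filter_upwards [hev, hsmall, eventually_ge_atTop 1] with n hgap hs hn1
    have hn1' : (1:ℝ) ≤ (n:ℝ) := by exact_mod_cast hn1
    have hα1 : α ≤ 1 := by linarith
    have hkey := key_bernoulli (hPpos n) (hPmono n) hα hα1
    have hgap' : P (n+1) - P n ≤ C * Real.log n ^ 2 := le_of_lt hgap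
    have hPa1 : 0 < P n ^ (α - 1) := Real.rpow_pos_of_pos (hPpos n) _
    have hlog2 : 0 ≤ Real.log n ^ (2:ℕ) := sq_nonneg _
    -- a n ≤ P n ^ β * (α * (P(n+1)-P n) * P n ^ (α-1))
    have h1 : a n ≤ P n ^ β * (α * (C * Real.log n ^ 2) * P n ^ (α - 1)) := by
      have hb : 0 ≤ P n ^ β := (Real.rpow_pos_of_pos (hPpos n) β).le
      have : P (n+1) ^ α - P n ^ α ≤ α * (C * Real.log n ^ 2) * P n ^ (α - 1) := by
        refine hkey.trans ?_
        have : α * (P (n+1) - P n) ≤ α * (C * Real.log n ^ 2) :=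
          mul_le_mul_of_nonneg_left hgap' hα
        exact mul_le_mul_of_nonneg_right this hPa1.le
      exact mul_le_mul_of_nonneg_left this hb
    have h2 : P n ^ β * (α * (C * Real.log n ^ 2) * P n ^ (α - 1))
        = α * C * (Real.log n ^ 2 * P n ^ (α + β - 1)) := by
      have hmul : P n ^ β * P n ^ (α - 1) = P n ^ (α + β - 1) := by
        rw [← Real.rpow_add (hPpos n)]; congr 1; ring
      calc P n ^ β * (α * (C * Real.log n ^ 2) * P n ^ (α - 1))
          = α * C * (Real.log n ^ 2 * (P n ^ β * P n ^ (α - 1))) := by ring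
        _ = α * C * (Real.log n ^ 2 * P n ^ (α + β - 1)) := by rw [hmul]
    have h3 : P n ^ (α + β - 1) ≤ (n:ℝ) ^ (α + β - 1) :=
      Real.rpow_le_rpow_of_nonpos (by linarith) (hnP n) (by linarith)
    have h4 : Real.log n ^ 2 * P n ^ (α + β - 1) ≤ Real.log n ^ 2 * (n:ℝ) ^ (α + β - 1) :=
      mul_le_mul_of_nonneg_left h3 hlog2
    have h5 : a n ≤ α * C * (Real.log n ^ 2 * (n:ℝ) ^ (α + β - 1)) := by
      calc a n ≤ α * C * (Real.log n ^ 2 * P n ^ (α + β - 1)) := by rw [← h2]; exact h1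
        _ ≤ α * C * (Real.log n ^ 2 * (n:ℝ) ^ (α + β - 1)) :=
          mul_le_mul_of_nonneg_left h4 (by positivity)
    refine h5.trans ?_
    have : α * C * (Real.log n ^ 2 * (n:ℝ) ^ (α + β - 1)) ≤ α * C * δ :=
      mul_le_mul_of_nonneg_left hs.le (by positivity)
    refine this.trans ?_
    rw [hδ]
    rw [mul_one_div, div_le_one (by positivity)]
    linarith
  obtain ⟨N, hN⟩ := eventually_atTop.mp hev2
  refine ⟨1 + ∑ i ∈ Finset.range N, |a i|, fun n => ?_⟩
  show a n ≤ _
  have hsum : 0 ≤ ∑ i ∈ Finset.range N, |a i| :=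
    Finset.sum_nonneg fun i _ => abs_nonneg _
  rcases le_or_gt N n with h | h
  · have := hN n h; linarith
  · have hmem : n ∈ Finset.range N := Finset.mem_range.mpr h
    have := Finset.single_le_sum (f := fun i => |a i|) (fun i _ => abs_nonneg _) hmem
    have := (le_abs_self (a n)).trans this
    linarith
end
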